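/- Let s ≥ 1 be an integer. If a connected graph G contains an s-geodesically covered cycle, then G contains a finite locally s-isometric subgraph. In particular, if G is (s,s−1)-dismantlable, then G contains no s-geodesically covered cycle. -/

import Mathlib

open SimpleGraph

variable {V : Type*}

/-- The ball of (real) radius `r` around `v` in `G` (w.r.t. the graph distance). -/
def gBall (G : SimpleGraph V) (v : V) (r : ℝ) : Set V :=
  {x : V | (G.dist v x : ℝ) ≤ r}

/-- The interval `I(u,v)`: vertices lying on shortest `(u,v)`-paths. -/
def gInterval (G : SimpleGraph V) (u v : V) : Set V :=
  {x : V | G.dist u x + G.dist x v = G.dist u v}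

/-- Gromov `δ`-hyperbolicity via the four-point condition. -/
def IsHyperbolic {W : Type*} (G : SimpleGraph W) (δ : ℝ) : Prop :=
  ∀ u v x y : W,
    (G.dist u v : ℝ) + (G.dist x y : ℝ) ≤
      max ((G.dist u x : ℝ) + (G.dist v y : ℝ)) ((G.dist u y : ℝ) + (G.dist v x : ℝ)) + 2 * δ

/-- `(s,s')*`-dismantlability: there is a well-order `lt` on the vertices such that every
vertex `v` which is not the least element is eliminated by some earlier vertex `u`,
i.e. `B_s(v) ∩ X_v ⊆ B_{s'}(u)` where `X_v = {w : w ⪯ v}`. -/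
def StarDismantlable (G : SimpleGraph V) (s s' : ℝ) : Prop :=
  ∃ lt : V → V → Prop, IsWellOrder V lt ∧
    ∀ v : V, (∃ w : V, lt w v) →
      ∃ u : V, lt u v ∧ gBall G v s ∩ {w : V | lt w v ∨ w = v} ⊆ gBall G u s'

/-- The ball of radius `r` around `v` in the subgraph of `G` induced on `V \ {u}`. -/
def gBallRemove (G : SimpleGraph V) (u v : V) (r : ℝ) : Set V :=
  {x : V | ∃ (hv : v ∈ {w : V | w ≠ u}) (hx : x ∈ {w : V | w ≠ u}),
    (G.induce {w : V | w ≠ u}).Reachable ⟨v, hv⟩ ⟨x, hx⟩ ∧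
    ((G.induce {w : V | w ≠ u}).dist ⟨v, hv⟩ ⟨x, hx⟩ : ℝ) ≤ r}

/-- `(s,s')`-dismantlability: there is a well-order `lt` on the vertices such that every
vertex `v` which is not the least element is eliminated by an earlier vertex `u`, i.e.
`B_s(v, G−u) ∩ X_v ⊆ B_{s'}(u)`. -/
def Dismantlable (G : SimpleGraph V) (s s' : ℝ) : Prop :=
  ∃ lt : V → V → Prop, IsWellOrder V lt ∧
    ∀ v : V, (∃ w : V, lt w v) →
      ∃ u : V, lt u v ∧ gBallRemove G u v s ∩ {w : V | lt w v ∨ w = v} ⊆ gBall G u s'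

/-- Weak modularity: the triangle and quadrangle conditions. -/
def WeaklyModular (G : SimpleGraph V) : Prop :=
  (∀ u v w : V, G.dist v w = 1 → 1 < G.dist u v → G.dist u v = G.dist u w →
    ∃ x : V, G.Adj v x ∧ G.Adj w x ∧ G.dist u x + 1 = G.dist u v) ∧
  (∀ u v w z : V, G.dist v z = 1 → G.dist w z = 1 → G.dist v w = 2 →
    2 ≤ G.dist u v → G.dist u v = G.dist u w → G.dist u z = G.dist u v + 1 →
    ∃ x : V, G.Adj v x ∧ G.Adj w x ∧ G.dist u x + 1 = G.dist u v)

/-- `u`, `v`, `w` form a metric triangle: the pairwise intervals intersect only in the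
common end-vertices. -/
def MetricTriangle (G : SimpleGraph V) (u v w : V) : Prop :=
  gInterval G u v ∩ gInterval G v w = {v} ∧
  gInterval G v w ∩ gInterval G w u = {w} ∧
  gInterval G w u ∩ gInterval G u v = {u}

/-- A walk of `G` is a geodesic if its length equals the distance between its endpoints. -/
def IsGeodesicWalk (G : SimpleGraph V) {x y : V} (p : G.Walk x y) : Prop :=
  p.length = G.dist x y

/-- `H` is a locally `s`-isometric subgraph of `G`: `H` contains a collection `P` of
geodesics of `G` such that every vertex `v` of `H` lies on some geodesic of `P` whose two
endpoints are both at distance at least `s` from `v` in `G`. -/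
def LocallyIsometricIn (G : SimpleGraph V) (H : G.Subgraph) (s : ℕ) : Prop :=
  H.verts.Nonempty ∧
  ∃ P : Set (Σ x y : V, G.Walk x y),
    (∀ p ∈ P, IsGeodesicWalk G p.2.2 ∧
      (∀ v ∈ p.2.2.support, v ∈ H.verts) ∧
      (∀ e ∈ p.2.2.edges, e ∈ H.edgeSet)) ∧
    (∀ v ∈ H.verts, ∃ p ∈ P, v ∈ p.2.2.support ∧
      s ≤ G.dist v p.1 ∧ s ≤ G.dist v p.2.1)

/-- A simple cycle of `G` of length `m`, given as an injective map `ZMod m → V` whose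
consecutive values are adjacent. -/
def IsCycleMap (G : SimpleGraph V) {m : ℕ} (c : ZMod m → V) : Prop :=
  3 ≤ m ∧ Function.Injective c ∧ ∀ i : ZMod m, G.Adj (c i) (c (i + 1))

/-- The simple cycle `c` (of length `m`) is `s`-geodesically covered: there is a cyclic
family of `n` subpaths of `c` (the `i`-th one starting at position `a i` and having length
`l i`), each of which is a geodesic of `G`, covering all edges of `c`, such that
nonconsecutive members are edge-disjoint and consecutive members overlap in a common
subpath of length at least `2s`. -/
def GeodCovered (G : SimpleGraph V) (s : ℕ) {m : ℕ} (c : ZMod m → V) : Prop :=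
  ∃ n : ℕ, 0 < n ∧ ∃ (a : ZMod n → ZMod m) (l : ZMod n → ℕ),
    (∀ i : ZMod n, l i < m) ∧
    -- each subpath is a geodesic of G
    (∀ i : ZMod n, G.dist (c (a i)) (c (a i + ((l i : ℕ) : ZMod m))) = l i) ∧
    -- every edge of c lies on some member of the family
    (∀ j : ZMod m, ∃ i : ZMod n, ∃ t : ℕ, t < l i ∧ a i + ((t : ℕ) : ZMod m) = j) ∧
    -- nonconsecutive members are edge-disjoint
    (∀ i i' : ZMod n, i' ≠ i → i' ≠ i + 1 → i ≠ i' + 1 →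
      ∀ t t' : ℕ, t < l i → t' < l i' →
        a i + ((t : ℕ) : ZMod m) ≠ a i' + ((t' : ℕ) : ZMod m)) ∧
    -- consecutive members overlap in a common subpath of length at least 2s
    (∀ i : ZMod n, ∃ k : ℕ, 2 * s ≤ k ∧ k ≤ l i ∧ k ≤ l (i + 1) ∧
      a (i + 1) + ((k : ℕ) : ZMod m) = a i + ((l i : ℕ) : ZMod m))

section AuxProof

variable {V : Type*} {G : SimpleGraph V}

lemma geodesic_split (hG : G.Connected) {x y v : V} (p : G.Walk x y)
    (hp : p.length = G.dist x y) (hv : v ∈ p.support) :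
    G.dist x v + G.dist v y = G.dist x y := by
  induction p generalizing v with
  | nil =>
    simp only [SimpleGraph.Walk.support_nil, List.mem_singleton] at hv
    subst hv; simp
  | @cons α β γ h q ih =>
    have hq : q.length = G.dist β γ := by
      have h1 : G.dist β γ ≤ q.length := SimpleGraph.dist_le q
      have h2 : G.dist α γ ≤ G.dist α β + G.dist β γ := hG.dist_triangle
      have h3 : G.dist α β ≤ 1 := by
        simpa using SimpleGraph.dist_le h.toWalk
      simp only [SimpleGraph.Walk.length_cons] at hp
      omega
    rcases List.mem_cons.mp (by simpa using hv) with rfl | hv'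
    · simp
    · have := ih hq hv'
      have h4 : G.dist α v ≤ 1 + G.dist β v := by
        have := hG.dist_triangle (u := α) (v := β) (w := v)
        have h3 : G.dist α β ≤ 1 := by simpa using SimpleGraph.dist_le h.toWalk
        omega
      have h5 : G.dist α γ ≤ G.dist α v + G.dist v γ := hG.dist_triangle
      simp only [SimpleGraph.Walk.length_cons] at hp
      omega

lemma walk_split {x y : V} (p : G.Walk x y) (t : ℕ) (ht : t ≤ p.length) :
    ∃ (w : V) (q₁ : G.Walk x w) (q₂ : G.Walk w y), q₁.length = t ∧
      q₂.length = p.length - t ∧ (∀ z ∈ q₁.support, z ∈ p.support) ∧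
      (∀ z ∈ q₂.support, z ∈ p.support) := by
  induction t generalizing x p with
  | zero => exact ⟨x, Walk.nil, p, by simp, by simp, by simp, fun z hz => hz⟩
  | succ t ih =>
    cases p with
    | nil => simp at ht
    | cons h q =>
      obtain ⟨w, q₁, q₂, h1, h2, h3, h4⟩ := ih q (by simpa using ht)
      exact ⟨w, Walk.cons h q₁, q₂, by simp [h1], by simp [h2], by
        intro z hz
        rcases List.mem_cons.mp (by simpa using hz) with rfl | hz'
        · simp
        · simp only [Walk.support_cons, List.mem_cons]
          exact Or.inr (h3 z hz'), by
        intro z hz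
        simp only [Walk.support_cons, List.mem_cons]
        exact Or.inr (h4 z hz)⟩

lemma induced_walk {u α β : V} (q : G.Walk α β) (h : ∀ z ∈ q.support, z ≠ u) :
    ∃ qi : (G.induce {w : V | w ≠ u}).Walk ⟨α, h α q.start_mem_support⟩
      ⟨β, h β q.end_mem_support⟩, qi.length = q.length := by
  induction q with
  | nil => exact ⟨Walk.nil, rfl⟩
  | @cons a b c hab q ih =>
    have hb : ∀ z ∈ q.support, z ≠ u := fun z hz => h z (by simp [hz])
    obtain ⟨qi, hqi⟩ := ih hb
    exact ⟨Walk.cons (by exact hab) qi, congrArg (· + 1) hqi⟩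

lemma finset_max (lt : V → V → Prop) [IsTrichotomous V lt] [IsTrans V lt] [IsIrrefl V lt]
    (F : Finset V) (h : F.Nonempty) : ∃ v ∈ F, ∀ w ∈ F, ¬ lt v w := by
  classical
  induction F using Finset.cons_induction with
  | empty => simp at h
  | cons a F ha ih =>
    rcases F.eq_empty_or_nonempty with rfl | hF
    · refine ⟨a, by simp, ?_⟩
      intro w hw haw
      simp only [Finset.mem_cons, Finset.notMem_empty, or_false] at hw
      rw [hw] at haw
      exact irrefl_of lt a haw
    · obtain ⟨v, hvF, hv⟩ := ih hF
      rcases trichotomous_of lt v a with h1 | h1 | h1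
      · refine ⟨a, by simp, ?_⟩
        intro w hw haw
        rcases Finset.mem_cons.mp hw with hwa | hw'
        · rw [hwa] at haw; exact irrefl_of lt a haw
        · exact hv w hw' (trans_of lt h1 haw)
      · refine ⟨v, by simp [hvF], ?_⟩
        intro w hw hvw
        rcases Finset.mem_cons.mp hw with hwa | hw'
        · rw [hwa, ← h1] at hvw; exact irrefl_of lt v hvw
        · exact hv w hw' hvw
      · refine ⟨v, by simp [hvF], ?_⟩
        intro w hw hvw
        rcases Finset.mem_cons.mp hw with hwa | hw'
        · rw [hwa] at hvw; exact irrefl_of lt v (trans_of lt hvw h1)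
        · exact hv w hw' hvw

lemma partB (hG : G.Connected) {s : ℕ} (hs : 1 ≤ s)
    (hd : Dismantlable G (s : ℝ) ((s : ℝ) - 1)) {H : G.Subgraph} (hfin : H.verts.Finite)
    (hloc : LocallyIsometricIn G H s) : False := by
  classical
  obtain ⟨lt, hwo, hdis⟩ := hd
  haveI : IsWellOrder V lt := hwo
  obtain ⟨hne, P, hP1, hP2⟩ := hloc
  obtain ⟨v, hvF, hvmax⟩ := finset_max lt hfin.toFinset (by simpa using hne)
  rw [Set.Finite.mem_toFinset] at hvF
  have hX : ∀ w ∈ H.verts, lt w v ∨ w = v := by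
    intro w hw
    rcases trichotomous_of lt w v with h | h | h
    · exact Or.inl h
    · exact Or.inr h
    · exact absurd h (hvmax w (hfin.mem_toFinset.mpr hw))
  obtain ⟨p, hpP, hvp, hdx, hdy⟩ := hP2 v hvF
  obtain ⟨hgeo, hsupH, -⟩ := hP1 p hpP
  obtain ⟨x, y, w⟩ := p
  simp only at hvp hdx hdy hgeo hsupH
  -- split at v
  set p₁ := w.takeUntil v hvp with hp₁
  set p₂ := w.dropUntil v hvp with hp₂
  have hspec : p₁.append p₂ = w := w.take_spec hvp
  have hlen : p₁.length + p₂.length = w.length := by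
    rw [← Walk.length_append, hspec]
  have hwlen : w.length = G.dist x y := hgeo
  have hsplit : G.dist x v + G.dist v y = G.dist x y := geodesic_split hG w hwlen hvp
  have h1 : G.dist x v ≤ p₁.length := dist_le p₁
  have h2 : G.dist v y ≤ p₂.length := dist_le p₂
  have hd1 : G.dist x v = p₁.length := by omega
  have hd2 : G.dist v y = p₂.length := by omega
  have hcx : G.dist v x = G.dist x v := SimpleGraph.dist_comm
  have hs1 : s ≤ p₁.length := by omega
  have hs2 : s ≤ p₂.length := by omega
  obtain ⟨x', r₁, r₁', hr₁len, hr₁'len, hr₁sup, hr₁'sup⟩ :=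
    walk_split p₁.reverse s (by simpa using hs1)
  obtain ⟨y', r₂, r₂', hr₂len, hr₂'len, hr₂sup, hr₂'sup⟩ := walk_split p₂ s hs2
  have hx'p₁ : x' ∈ p₁.support := by
    have := hr₁sup x' r₁.end_mem_support
    simpa [Walk.support_reverse, List.mem_reverse] using this
  have hy'p₂ : y' ∈ p₂.support := hr₂sup y' r₂.end_mem_support
  have hx'p : x' ∈ w.support := w.support_takeUntil_subset hvp hx'p₁
  have hy'p : y' ∈ w.support := w.support_dropUntil_subset hvp hy'p₂
  have hp₁geo : p₁.length = G.dist x v := hd1.symm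
  have hp₂geo : p₂.length = G.dist v y := hd2.symm
  have hrev : p₁.reverse.length = p₁.length := Walk.length_reverse _
  have e1 : G.dist x x' + G.dist x' v = G.dist x v := geodesic_split hG p₁ hp₁geo hx'p₁
  have e2 : G.dist x' x ≤ r₁'.length := dist_le r₁'
  have e3 : G.dist v x' ≤ r₁.length := dist_le r₁
  have c1 : G.dist x' x = G.dist x x' := SimpleGraph.dist_comm
  have c2 : G.dist x' v = G.dist v x' := SimpleGraph.dist_comm
  have ex' : G.dist v x' = s := by omega
  have exx' : G.dist x x' = p₁.length - s := by omega
  have e4 : G.dist x x' + G.dist x' y = G.dist x y := geodesic_split hG w hwlen hx'p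
  have ex'y : G.dist x' y = p₂.length + s := by omega
  have e5 : G.dist v y' + G.dist y' y = G.dist v y := geodesic_split hG p₂ hp₂geo hy'p₂
  have e6 : G.dist v y' ≤ r₂.length := dist_le r₂
  have e7 : G.dist y' y ≤ r₂'.length := dist_le r₂'
  have ey' : G.dist v y' = s := by omega
  have ey'y : G.dist y' y = p₂.length - s := by omega
  have e8 : G.dist x y' + G.dist y' y = G.dist x y := geodesic_split hG w hwlen hy'p
  have exy' : G.dist x y' = p₁.length + s := by omega
  have e9 : G.dist x' y ≤ G.dist x' y' + G.dist y' y := hG.dist_triangle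
  have hxy2s : 2 * s ≤ G.dist x' y' := by omega
  have hxH : x ∈ H.verts := hsupH x w.start_mem_support
  have hxv : x ≠ v := by
    intro h
    rw [h] at hdx
    rw [SimpleGraph.dist_self] at hdx
    omega
  have hltxv : lt x v := by
    rcases hX x hxH with h | h
    · exact h
    · exact absurd h hxv
  obtain ⟨u, hultv, hsub⟩ := hdis v ⟨x, hltxv⟩
  have huv : u ≠ v := fun h => irrefl_of lt v (h ▸ hultv)
  have hdvu : 1 ≤ G.dist v u := hG.pos_dist_of_ne (Ne.symm huv)
  have hball : ∀ (z : V) (q : G.Walk v z), q.length ≤ s → (∀ t ∈ q.support, t ≠ u) →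
      z ∈ H.verts → G.dist u z + 1 ≤ s := by
    intro z q hql hqu hzH
    obtain ⟨qi, hqi⟩ := induced_walk q hqu
    have hzball : z ∈ gBallRemove G u v (s : ℝ) := by
      refine ⟨hqu v q.start_mem_support, hqu z q.end_mem_support, qi.reachable, ?_⟩
      have h1 := dist_le qi
      have h2 : (G.induce {w : V | w ≠ u}).dist
          ⟨v, hqu v q.start_mem_support⟩ ⟨z, hqu z q.end_mem_support⟩ ≤ s := by omega
      exact_mod_cast h2
    have hmem : z ∈ gBall G u ((s : ℝ) - 1) := hsub ⟨hzball, hX z hzH⟩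
    have h3 : (G.dist u z : ℝ) ≤ (s : ℝ) - 1 := hmem
    have h4 : (G.dist u z : ℝ) + 1 ≤ (s : ℝ) := by linarith
    exact_mod_cast h4
  have hr₁geo : r₁.length = G.dist v x' := by omega
  have hr₂geo : r₂.length = G.dist v y' := by omega
  have hx'H : x' ∈ H.verts := hsupH x' hx'p
  have hy'H : y' ∈ H.verts := hsupH y' hy'p
  by_cases hu1 : u ∈ r₁.support <;> by_cases hu2 : u ∈ r₂.support
  · have g1 : G.dist v u + G.dist u x' = G.dist v x' := geodesic_split hG r₁ hr₁geo hu1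
    have g2 : G.dist v u + G.dist u y' = G.dist v y' := geodesic_split hG r₂ hr₂geo hu2
    have t1 : G.dist x' y' ≤ G.dist x' u + G.dist u y' := hG.dist_triangle
    have c3 : G.dist x' u = G.dist u x' := SimpleGraph.dist_comm
    omega
  · have hup₁ : u ∈ p₁.support := by
      have := hr₁sup u hu1
      simpa [Walk.support_reverse, List.mem_reverse] using this
    have g2 : G.dist x u + G.dist u v = G.dist x v := geodesic_split hG p₁ hp₁geo hup₁
    have hb := hball y' r₂ (le_of_eq hr₂len) (fun t ht htu => hu2 (htu ▸ ht)) hy'H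
    have t1 : G.dist x y' ≤ G.dist x u + G.dist u y' := hG.dist_triangle
    have c3 : G.dist u v = G.dist v u := SimpleGraph.dist_comm
    omega
  · have hup₂ : u ∈ p₂.support := hr₂sup u hu2
    have g2 : G.dist v u + G.dist u y = G.dist v y := geodesic_split hG p₂ hp₂geo hup₂
    have hb := hball x' r₁ (le_of_eq hr₁len) (fun t ht htu => hu1 (htu ▸ ht)) hx'H
    have t1 : G.dist x' y ≤ G.dist x' u + G.dist u y := hG.dist_triangle
    have c3 : G.dist x' u = G.dist u x' := SimpleGraph.dist_comm
    omega
  · have hbx := hball x' r₁ (le_of_eq hr₁len) (fun t ht htu => hu1 (htu ▸ ht)) hx'H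
    have hby := hball y' r₂ (le_of_eq hr₂len) (fun t ht htu => hu2 (htu ▸ ht)) hy'H
    have t1 : G.dist x' y' ≤ G.dist x' u + G.dist u y' := hG.dist_triangle
    have c3 : G.dist x' u = G.dist u x' := SimpleGraph.dist_comm
    omega



lemma sum_range_zmod {n : ℕ} [NeZero n] (F : ZMod n → ℕ) :
    ∑ q ∈ Finset.range n, F ((q : ℕ) : ZMod n) = ∑ p : ZMod n, F p := by
  apply Finset.sum_bij' (i := fun q _ => ((q : ℕ) : ZMod n)) (j := fun p _ => p.val)
  · intro q hq; exact Finset.mem_univ _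
  · intro p hp; exact Finset.mem_range.mpr (ZMod.val_lt p)
  · intro q hq; exact ZMod.val_cast_of_lt (Finset.mem_range.mp hq)
  · intro p hp; exact ZMod.natCast_zmod_val p
  · intro q hq; rfl

lemma deep_cover {m n s : ℕ} (hm : 3 ≤ m) (hn : 0 < n) (hs : 1 ≤ s)
    (a : ZMod n → ZMod m) (l k : ZMod n → ℕ)
    (hlm : ∀ i, l i < m)
    (hk2s : ∀ i, 2 * s ≤ k i) (hkl : ∀ i, k i ≤ l i) (hkl' : ∀ i, k i ≤ l (i + 1))
    (hov : ∀ i, a (i + 1) + ((k i : ℕ) : ZMod m) = a i + ((l i : ℕ) : ZMod m))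
    (hcov : ∀ j : ZMod m, ∃ i t, t < l i ∧ a i + ((t : ℕ) : ZMod m) = j) :
    ∀ j : ZMod m, ∃ i t, t ≤ l i ∧ a i + ((t : ℕ) : ZMod m) = j ∧ s ≤ t ∧ t + s ≤ l i := by
  classical
  haveI : NeZero n := ⟨hn.ne'⟩
  haveI : NeZero m := ⟨by omega⟩
  have ha : ∀ i, a (i + 1) = a i + ((l i - k i : ℕ) : ZMod m) := by
    intro i
    rw [Nat.cast_sub (hkl i)]
    linear_combination hov i
  set S : ℕ := ∑ i : ZMod n, (l i - k i) with hSdef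
  have hSm : (S : ZMod m) = 0 := by
    push_cast [hSdef, Nat.cast_sum]
    have h1 : ∑ i : ZMod n, (((l i - k i : ℕ) : ZMod m)) = ∑ i : ZMod n, (a (i + 1) - a i) := by
      apply Finset.sum_congr rfl
      intro i _
      rw [ha i]; ring
    rw [h1, Finset.sum_sub_distrib]
    have h2 : ∑ i : ZMod n, a (i + 1) = ∑ i : ZMod n, a i :=
      Fintype.sum_equiv (Equiv.addRight 1) _ _ (fun i => rfl)
    rw [h2, sub_self]
  have hdvd : m ∣ S := (ZMod.natCast_eq_zero_iff S m).mp hSm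
  have hsm : s < m := by have := hk2s 0; have := hkl 0; have := hlm 0; omega
  have hSne : S ≠ 0 := by
    intro h
    have hz : ∀ i : ZMod n, l i - k i = 0 := by
      intro i
      have := (Finset.sum_eq_zero_iff.mp (hSdef ▸ h)) i (Finset.mem_univ i)
      exact this
    have hstep : ∀ i, a (i + 1) = a i := by
      intro i; rw [ha i, hz i]; simp
    have hconst : ∀ i, a i = a 0 := by
      have hr : ∀ r : ℕ, a ((r : ℕ) : ZMod n) = a 0 := by
        intro r
        induction r with
        | zero => norm_num
        | succ r ih =>
          have e : (((r + 1 : ℕ)) : ZMod n) = ((r : ℕ) : ZMod n) + 1 := by push_cast; ring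
          rw [e, hstep, ih]
      intro i
      have := hr i.val
      rwa [ZMod.natCast_zmod_val] at this
    obtain ⟨i, t, htl, hat⟩ := hcov (a 0 + ((m - 1 : ℕ) : ZMod m))
    rw [hconst i] at hat
    have hcast : ((t : ℕ) : ZMod m) = ((m - 1 : ℕ) : ZMod m) := add_left_cancel hat
    have ht1 : t < m := lt_trans htl (hlm i)
    have ht2 : m - 1 < m := by omega
    have := congrArg ZMod.val hcast
    rw [ZMod.val_cast_of_lt ht1, ZMod.val_cast_of_lt ht2] at this
    have := hlm i
    omega
  have hmS : m ≤ S := Nat.le_of_dvd (Nat.pos_of_ne_zero hSne) hdvd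
  -- backward process
  have back : ∀ (i : ZMod n) (t : ℕ) (j : ZMod m), t < s → a i + ((t : ℕ) : ZMod m) = j →
      ∃ i' t', t' ≤ l i' ∧ a i' + ((t' : ℕ) : ZMod m) = j ∧ s ≤ t' ∧ t' + s ≤ l i' := by
    intro i t j hts haj
    set d : ℕ → ℕ := fun q => l (i - ((q + 1 : ℕ) : ZMod n)) - k (i - ((q + 1 : ℕ) : ZMod n))
      with hd
    set T : ℕ → ℕ := fun r => t + ∑ q ∈ Finset.range r, d q with hT
    have hinv : ∀ r : ℕ, a (i - ((r : ℕ) : ZMod n)) + ((T r : ℕ) : ZMod m) = j := by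
      intro r
      induction r with
      | zero => simpa [hT] using haj
      | succ r ih =>
        have h1 : T (r + 1) = T r + d r := by
          simp only [hT, Finset.sum_range_succ]; omega
        have h2 : (i - (((r + 1 : ℕ)) : ZMod n)) + 1 = i - ((r : ℕ) : ZMod n) := by
          push_cast; ring
        have h3 := ha (i - (((r + 1 : ℕ)) : ZMod n))
        rw [h2] at h3
        have h5 : ((T (r + 1) : ℕ) : ZMod m) = ((T r : ℕ) : ZMod m) + ((d r : ℕ) : ZMod m) := by
          rw [h1]; push_cast; ring
        rw [h5]
        have h4 : (d r : ZMod m) = ((l (i - ((r + 1 : ℕ) : ZMod n)) -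
            k (i - ((r + 1 : ℕ) : ZMod n)) : ℕ) : ZMod m) := by rw [hd]
        calc a (i - (((r + 1 : ℕ)) : ZMod n)) + (((T r : ℕ) : ZMod m) + ((d r : ℕ) : ZMod m))
            = (a (i - (((r + 1 : ℕ)) : ZMod n)) + ((d r : ℕ) : ZMod m)) + ((T r : ℕ) : ZMod m) := by
              ring
          _ = a (i - ((r : ℕ) : ZMod n)) + ((T r : ℕ) : ZMod m) := by rw [h4, ← h3]
          _ = j := ih
    have hsum : ∑ q ∈ Finset.range n, d q = S := by
      have e1 : ∀ q : ℕ, d q = (fun p : ZMod n => l (i - (p + 1)) - k (i - (p + 1))) ((q : ℕ) : ZMod n) := by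
        intro q; simp only [hd]; push_cast; ring_nf
      calc ∑ q ∈ Finset.range n, d q
          = ∑ q ∈ Finset.range n, (fun p : ZMod n => l (i - (p + 1)) - k (i - (p + 1))) ((q : ℕ) : ZMod n) := by
            exact Finset.sum_congr rfl (fun q _ => e1 q)
        _ = ∑ p : ZMod n, (l (i - (p + 1)) - k (i - (p + 1))) :=
            sum_range_zmod (fun p : ZMod n => l (i - (p + 1)) - k (i - (p + 1)))
        _ = S := by
            rw [hSdef]
            exact Equiv.sum_comp ((Equiv.addRight (1 : ZMod n)).trans (Equiv.subLeft i))
              (fun p => l p - k p)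
    have hex : ∃ r, s ≤ T r := ⟨n, by simp only [hT, hsum]; omega⟩
    set r := Nat.find hex with hrdef
    have hr : s ≤ T r := Nat.find_spec hex
    have hr0 : r ≠ 0 := by
      intro h
      rw [h] at hr
      simp only [hT, Finset.range_zero, Finset.sum_empty, add_zero] at hr
      omega
    obtain ⟨r', hr'⟩ : ∃ r', r = r' + 1 := ⟨r - 1, by omega⟩
    have hrmin : T r' < s := by
      have := Nat.find_min hex (show r' < r by omega)
      omega
    have hstep : T (r' + 1) = T r' + d r' := by
      simp only [hT, Finset.sum_range_succ]; omega
    have hdr' : d r' = l (i - ((r' + 1 : ℕ) : ZMod n)) - k (i - ((r' + 1 : ℕ) : ZMod n)) := rfl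
    refine ⟨i - ((r' + 1 : ℕ) : ZMod n), T (r' + 1), ?_, ?_, ?_, ?_⟩
    · have := hk2s (i - ((r' + 1 : ℕ) : ZMod n)); have := hkl (i - ((r' + 1 : ℕ) : ZMod n)); omega
    · exact hinv (r' + 1)
    · rw [← hr']; exact hr
    · have := hk2s (i - ((r' + 1 : ℕ) : ZMod n)); have := hkl (i - ((r' + 1 : ℕ) : ZMod n)); omega
  -- forward process
  have fwd : ∀ (i : ZMod n) (t : ℕ) (j : ZMod m), t < l i → l i < t + s →
      a i + ((t : ℕ) : ZMod m) = j →
      ∃ i' t', t' ≤ l i' ∧ a i' + ((t' : ℕ) : ZMod m) = j ∧ s ≤ t' ∧ t' + s ≤ l i' := by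
    intro i t j htl hlts haj
    set d : ℕ → ℕ := fun q => l (i + ((q + 1 : ℕ) : ZMod n)) - k (i + ((q : ℕ) : ZMod n))
      with hd
    set U : ℕ → ℕ := fun r => (l i - t) + ∑ q ∈ Finset.range r, d q with hU
    have hinv : ∀ r : ℕ, (∀ q, q < r → U q < s) →
        U r ≤ l (i + ((r : ℕ) : ZMod n)) ∧
        a (i + ((r : ℕ) : ZMod n)) + ((l (i + ((r : ℕ) : ZMod n)) - U r : ℕ) : ZMod m) = j := by
      intro r
      induction r with
      | zero =>
        intro _
        have e0 : U 0 = l i - t := by simp [hU]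
        have e1 : ((0 : ℕ) : ZMod n) = 0 := by norm_num
        rw [e0, e1, add_zero]
        constructor
        · omega
        · rw [show l i - (l i - t) = t from by omega]
          exact haj
      | succ r ih =>
        intro hq
        obtain ⟨hU1, hU2⟩ := ih (fun q hq' => hq q (by omega))
        have hUr : U r < s := hq r (by omega)
        set ir := i + ((r : ℕ) : ZMod n) with hir
        have hir1 : ir + 1 = i + ((r + 1 : ℕ) : ZMod n) := by rw [hir]; push_cast; ring
        have hUstep : U (r + 1) = U r + d r := by
          simp only [hU, Finset.sum_range_succ]; omega
        have hdr : d r = l (i + ((r + 1 : ℕ) : ZMod n)) - k ir := rfl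
        have hkir : k ir ≤ l (i + ((r + 1 : ℕ) : ZMod n)) := by
          have := hkl' ir; rwa [hir1] at this
        have hUk : U r ≤ k ir := by have := hk2s ir; omega
        have hov' := hov ir
        rw [hir1] at hov'
        have hl1 : U (r + 1) ≤ l (i + ((r + 1 : ℕ) : ZMod n)) := by omega
        refine ⟨hl1, ?_⟩
        have hkey : l (i + ((r + 1 : ℕ) : ZMod n)) - U (r + 1) = k ir - U r := by omega
        rw [hkey]
        have e1 : ((k ir - U r : ℕ) : ZMod m) = ((k ir : ℕ) : ZMod m) - ((U r : ℕ) : ZMod m) :=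
          Nat.cast_sub hUk
        have e2 : ((l ir - U r : ℕ) : ZMod m) = ((l ir : ℕ) : ZMod m) - ((U r : ℕ) : ZMod m) :=
          Nat.cast_sub hU1
        rw [e2] at hU2
        rw [e1]
        linear_combination hov' + hU2
    have hsuml : ∑ q ∈ Finset.range n, l (i + ((q + 1 : ℕ) : ZMod n)) = ∑ p : ZMod n, l p := by
      calc ∑ q ∈ Finset.range n, l (i + ((q + 1 : ℕ) : ZMod n))
          = ∑ q ∈ Finset.range n, (fun p : ZMod n => l (i + (p + 1))) ((q : ℕ) : ZMod n) := by
            refine Finset.sum_congr rfl (fun q _ => ?_)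
            simp only []
            congr 1
            push_cast; ring
        _ = ∑ p : ZMod n, l (i + (p + 1)) := sum_range_zmod (fun p : ZMod n => l (i + (p + 1)))
        _ = ∑ p : ZMod n, l p :=
            Equiv.sum_comp ((Equiv.addRight (1 : ZMod n)).trans (Equiv.addLeft i)) l
    have hsumk : ∑ q ∈ Finset.range n, k (i + ((q : ℕ) : ZMod n)) = ∑ p : ZMod n, k p := by
      calc ∑ q ∈ Finset.range n, k (i + ((q : ℕ) : ZMod n))
          = ∑ q ∈ Finset.range n, (fun p : ZMod n => k (i + p)) ((q : ℕ) : ZMod n) :=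
            Finset.sum_congr rfl (fun q _ => rfl)
        _ = ∑ p : ZMod n, k (i + p) := sum_range_zmod (fun p : ZMod n => k (i + p))
        _ = ∑ p : ZMod n, k p := Equiv.sum_comp (Equiv.addLeft i) k
    have hsum : ∑ q ∈ Finset.range n, d q = S := by
      have hterm : ∀ q ∈ Finset.range n, k (i + ((q : ℕ) : ZMod n)) ≤
          l (i + ((q + 1 : ℕ) : ZMod n)) := by
        intro q _
        have := hkl' (i + ((q : ℕ) : ZMod n))
        have e : (i + ((q : ℕ) : ZMod n)) + 1 = i + ((q + 1 : ℕ) : ZMod n) := by push_cast; ring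
        rwa [e] at this
      have h1 : ∑ q ∈ Finset.range n, d q =
          ∑ q ∈ Finset.range n, l (i + ((q + 1 : ℕ) : ZMod n)) -
          ∑ q ∈ Finset.range n, k (i + ((q : ℕ) : ZMod n)) := by
        rw [hd]
        exact Finset.sum_tsub_distrib _ hterm
      have h2 : S = ∑ p : ZMod n, l p - ∑ p : ZMod n, k p := by
        rw [hSdef]
        exact Finset.sum_tsub_distrib _ (fun p _ => hkl p)
      rw [h1, hsuml, hsumk, ← h2]
    have hex : ∃ r, s ≤ U r := ⟨n, by simp only [hU, hsum]; omega⟩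
    set r := Nat.find hex with hrdef
    have hr : s ≤ U r := Nat.find_spec hex
    have hr0 : r ≠ 0 := by
      intro h
      rw [h] at hr
      simp only [hU, Finset.range_zero, Finset.sum_empty, add_zero] at hr
      omega
    obtain ⟨r', hr'⟩ : ∃ r', r = r' + 1 := ⟨r - 1, by omega⟩
    have hqmin : ∀ q, q < r' + 1 → U q < s := by
      intro q hq
      have := Nat.find_min hex (show q < r by omega)
      omega
    obtain ⟨hU1, hU2⟩ := hinv (r' + 1) hqmin
    have hUr' : U r' < s := hqmin r' (by omega)
    have hUstep : U (r' + 1) = U r' + d r' := by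
      simp only [hU, Finset.sum_range_succ]; omega
    have hsU : s ≤ U (r' + 1) := by rw [← hr']; exact hr
    set i' := i + ((r' + 1 : ℕ) : ZMod n) with hi'
    have hdr : d r' = l i' - k (i + ((r' : ℕ) : ZMod n)) := rfl
    have hkir : k (i + ((r' : ℕ) : ZMod n)) ≤ l i' := by
      have := hkl' (i + ((r' : ℕ) : ZMod n))
      have e : (i + ((r' : ℕ) : ZMod n)) + 1 = i' := by rw [hi']; push_cast; ring
      rwa [e] at this
    have hk2 := hk2s (i + ((r' : ℕ) : ZMod n))
    refine ⟨i', l i' - U (r' + 1), by omega, hU2, by omega, by omega⟩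
  -- combine
  intro j
  obtain ⟨i, t, htl, hat⟩ := hcov j
  by_cases h1 : t < s
  · exact back i t j h1 hat
  · by_cases h2 : l i < t + s
    · exact fwd i t j htl h2 hat
    · exact ⟨i, t, le_of_lt htl, hat, by omega, by omega⟩

variable {m : ℕ} {c : ZMod m → V}

lemma cyc_walk (hadj : ∀ i : ZMod m, G.Adj (c i) (c (i + 1))) (t : ℕ) (j : ZMod m) :
    ∃ p : G.Walk (c j) (c (j + ((t : ℕ) : ZMod m))), p.length = t ∧
      (∀ z ∈ p.support, ∃ t' : ℕ, t' ≤ t ∧ z = c (j + ((t' : ℕ) : ZMod m))) ∧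
      (∀ t' : ℕ, t' ≤ t → c (j + ((t' : ℕ) : ZMod m)) ∈ p.support) ∧
      (∀ e ∈ p.edges, ∃ j' : ZMod m, e = s(c j', c (j' + 1))) := by
  induction t generalizing j with
  | zero =>
    refine ⟨Walk.nil.copy rfl (congrArg c (by push_cast; ring)), by simp, ?_, ?_, by simp⟩
    · intro z hz
      rw [Walk.support_copy] at hz
      simp only [Walk.support_nil, List.mem_singleton] at hz
      exact ⟨0, le_refl 0, by rw [hz]; congr 1; push_cast; ring⟩
    · intro t' ht'
      rw [Nat.le_zero] at ht'
      subst ht'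
      rw [Walk.support_copy]
      simp only [Walk.support_nil, List.mem_singleton]
      congr 1; push_cast; ring
  | succ t ih =>
    obtain ⟨p', hlen, hsup1, hsup2, hedge⟩ := ih (j + 1)
    have hend : c ((j + 1) + ((t : ℕ) : ZMod m)) = c (j + ((t + 1 : ℕ) : ZMod m)) := by
      congr 1; push_cast; ring
    refine ⟨(Walk.cons (hadj j) p').copy rfl hend, by simp [hlen], ?_, ?_, ?_⟩
    · intro z hz
      rw [Walk.support_copy] at hz
      rcases List.mem_cons.mp (by simpa using hz) with rfl | hz'
      · exact ⟨0, by omega, by congr 1; push_cast; ring⟩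
      · obtain ⟨t', ht', rfl⟩ := hsup1 z hz'
        exact ⟨t' + 1, by omega, by congr 1; push_cast; ring⟩
    · intro t' ht'
      rw [Walk.support_copy]
      simp only [Walk.support_cons, List.mem_cons]
      match t' with
      | 0 => exact Or.inl (by congr 1; push_cast; ring)
      | (t'' + 1) =>
        right
        have := hsup2 t'' (by omega)
        convert this using 2
        push_cast; ring
    · intro e he
      rw [Walk.edges_copy] at he
      rcases List.mem_cons.mp (by simpa using he) with rfl | he'
      · exact ⟨j, rfl⟩
      · exact hedge e he'

lemma partA (hG : G.Connected) {s : ℕ} (hs : 1 ≤ s)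
    (hc : IsCycleMap G c) (hcov : GeodCovered G s c) :
    ∃ H : G.Subgraph, H.verts.Finite ∧ LocallyIsometricIn G H s := by
  classical
  obtain ⟨hm3, hcinj, hadj⟩ := hc
  obtain ⟨n, hn, a, l, hlm, hgeo, hcove, hdisj, hov⟩ := hcov
  haveI : NeZero m := ⟨by omega⟩
  haveI : NeZero n := ⟨hn.ne'⟩
  choose k hk1 hk2 hk3 hk4 using hov
  choose W hWlen hWsup1 hWsup2 hWedge using fun i : ZMod n => cyc_walk hadj (l i) (a i)
  refine ⟨{ verts := Set.range c
            Adj := fun x y => ∃ j : ZMod m, (x = c j ∧ y = c (j + 1)) ∨ (x = c (j + 1) ∧ y = c j)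
            adj_sub := ?_
            edge_vert := ?_
            symm := ?_ }, Set.finite_range c, ⟨c 0, ⟨0, rfl⟩⟩, Set.range
              (fun i : ZMod n => (⟨c (a i), c (a i + ((l i : ℕ) : ZMod m)), W i⟩ :
                Σ x y : V, G.Walk x y)), ?_, ?_⟩
  · rintro v w ⟨j, ⟨rfl, rfl⟩ | ⟨rfl, rfl⟩⟩
    · exact hadj j
    · exact (hadj j).symm
  · rintro v w ⟨j, ⟨rfl, h⟩ | ⟨rfl, h⟩⟩ <;> exact Set.mem_range_self _
  · refine ⟨?_⟩; rintro v w ⟨j, h | h⟩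
    · exact ⟨j, Or.inr ⟨h.2, h.1⟩⟩
    · exact ⟨j, Or.inl ⟨h.2, h.1⟩⟩
  · rintro p ⟨i, rfl⟩
    refine ⟨?_, ?_, ?_⟩
    · show (W i).length = G.dist (c (a i)) (c (a i + ((l i : ℕ) : ZMod m)))
      rw [hWlen i, hgeo i]
    · intro v hv
      obtain ⟨t', _, rfl⟩ := hWsup1 i v hv
      exact ⟨_, rfl⟩
    · intro e he
      obtain ⟨j', rfl⟩ := hWedge i e he
      rw [Subgraph.mem_edgeSet]
      exact ⟨j', Or.inl ⟨rfl, rfl⟩⟩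
  · rintro v ⟨j, rfl⟩
    obtain ⟨i, t, htl, hat, hst, hts⟩ :=
      deep_cover hm3 hn hs a l k hlm hk1 hk2 hk3 hk4 hcove j
    obtain ⟨q1, hq1len, -, -, -⟩ := cyc_walk hadj t (a i)
    obtain ⟨q2, hq2len, -, -, -⟩ := cyc_walk hadj (l i - t) (a i + ((t : ℕ) : ZMod m))
    have hend : (a i + ((t : ℕ) : ZMod m)) + ((l i - t : ℕ) : ZMod m) =
        a i + ((l i : ℕ) : ZMod m) := by
      rw [Nat.cast_sub htl]; ring
    have dA : G.dist (c (a i)) (c (a i + ((t : ℕ) : ZMod m))) ≤ t := by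
      have := dist_le q1; omega
    have dB : G.dist (c (a i + ((t : ℕ) : ZMod m))) (c (a i + ((l i : ℕ) : ZMod m))) ≤
        l i - t := by
      have := dist_le (q2.copy rfl (congrArg c hend))
      rw [Walk.length_copy] at this
      omega
    have tri : G.dist (c (a i)) (c (a i + ((l i : ℕ) : ZMod m))) ≤
        G.dist (c (a i)) (c (a i + ((t : ℕ) : ZMod m))) +
        G.dist (c (a i + ((t : ℕ) : ZMod m))) (c (a i + ((l i : ℕ) : ZMod m))) :=
      hG.dist_triangle
    have htot := hgeo i
    have hA : G.dist (c (a i)) (c (a i + ((t : ℕ) : ZMod m))) = t := by omega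
    have hB : G.dist (c (a i + ((t : ℕ) : ZMod m))) (c (a i + ((l i : ℕ) : ZMod m))) =
        l i - t := by omega
    refine ⟨⟨c (a i), c (a i + ((l i : ℕ) : ZMod m)), W i⟩, ⟨i, rfl⟩, ?_, ?_, ?_⟩
    · rw [← hat]
      exact hWsup2 i t htl
    · show s ≤ G.dist (c j) (c (a i))
      rw [← hat, SimpleGraph.dist_comm, hA]
      exact hst
    · show s ≤ G.dist (c j) (c (a i + ((l i : ℕ) : ZMod m)))
      rw [← hat, hB]
      omega

end AuxProof

theorem statement8 (V : Type*) (G : SimpleGraph V) (hG : G.Connected)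
    (s : ℕ) (hs : 1 ≤ s) :
    ((∃ (m : ℕ) (c : ZMod m → V), IsCycleMap G c ∧ GeodCovered G s c) →
      ∃ H : G.Subgraph, H.verts.Finite ∧ LocallyIsometricIn G H s) ∧
    (Dismantlable G (s : ℝ) ((s : ℝ) - 1) →
      ¬ ∃ (m : ℕ) (c : ZMod m → V), IsCycleMap G c ∧ GeodCovered G s c) := by
  constructor
  · rintro ⟨m, c, hc, hcov⟩
    exact partA hG hs hc hcov
  · rintro hd ⟨m, c, hc, hcov⟩
    obtain ⟨H, hfin, hloc⟩ := partA hG hs hc hcov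
    exact partB hG hs hd hfin hloc
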